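/- Let μ be a Borel probability measure on ℝ with compact support which is not a point mass, and let α ∈ (0,1). Then the set A_α := {c ∈ ℝ : there exists w ∈ ℂ ∖ ℝ with w·G_μ(w + c) = 1 − α} is an open subset of ℝ. -/

import Mathlib

open MeasureTheory Complex

open Metric Filter Topology

/-- The Cauchy (Stieltjes) transform of a measure on `ℝ`. -/
noncomputable def cauchyT (μ : Measure ℝ) (w : ℂ) : ℂ := ∫ t : ℝ, (w - (t : ℂ))⁻¹ ∂μ

lemma sub_ofReal_ne_zero {z : ℂ} (hz : z.im ≠ 0) (t : ℝ) : z - (t : ℂ) ≠ 0 := by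
  intro h
  apply hz
  have := congrArg Complex.im h
  simpa using this

lemma norm_inv_sub_le {z : ℂ} (hz : z.im ≠ 0) (t : ℝ) :
    ‖(z - (t : ℂ))⁻¹‖ ≤ |z.im|⁻¹ := by
  rw [norm_inv]
  apply inv_anti₀ (abs_pos.2 hz)
  calc |z.im| = |(z - (t:ℂ)).im| := by simp
    _ ≤ ‖z - (t:ℂ)‖ := abs_im_le_norm _

lemma aesm_inv (μ : Measure ℝ) (z : ℂ) :
    AEStronglyMeasurable (fun t : ℝ => (z - (t : ℂ))⁻¹) μ :=
  ((measurable_const.sub Complex.measurable_ofReal).inv).aestronglyMeasurable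

lemma integrable_inv (μ : Measure ℝ) [IsProbabilityMeasure μ] {z : ℂ} (hz : z.im ≠ 0) :
    Integrable (fun t : ℝ => (z - (t : ℂ))⁻¹) μ :=
  (integrable_const (|z.im|⁻¹)).mono' (aesm_inv μ z)
    (Filter.Eventually.of_forall fun t => norm_inv_sub_le hz t)

lemma cauchyT_hasDerivAt (μ : Measure ℝ) [IsProbabilityMeasure μ] {z : ℂ} (hz : z.im ≠ 0) :
    HasDerivAt (cauchyT μ) (∫ t : ℝ, -(((z - (t : ℂ)) ^ 2)⁻¹) ∂μ) z := by
  have hε : 0 < |z.im| / 2 := by positivity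
  have him : ∀ w ∈ ball z (|z.im| / 2), |z.im| / 2 ≤ |w.im| := by
    intro w hw
    have h1 : |w.im - z.im| ≤ ‖w - z‖ := by
      simpa using abs_im_le_norm (w - z)
    have h2 : ‖w - z‖ < |z.im| / 2 := mem_ball_iff_norm.1 hw
    have := abs_sub_abs_le_abs_sub z.im w.im
    rw [abs_sub_comm z.im w.im] at this
    linarith
  refine (hasDerivAt_integral_of_dominated_loc_of_deriv_le (μ := μ)
    (F := fun w (t : ℝ) => (w - (t:ℂ))⁻¹) (F' := fun w (t : ℝ) => -(((w - (t:ℂ)) ^ 2)⁻¹))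
    (bound := fun _ => ((|z.im| / 2) ^ 2)⁻¹) (ball_mem_nhds z hε)
    (Filter.Eventually.of_forall fun w => aesm_inv μ w)
    (integrable_inv μ hz) ?_ ?_ (integrable_const _) ?_).2
  · exact (((measurable_const.sub Complex.measurable_ofReal).pow_const 2).inv.neg).aestronglyMeasurable
  · refine Filter.Eventually.of_forall fun t => fun w hw => ?_
    have h1 : |z.im| / 2 ≤ |w.im| := him w hw
    have h2 : |w.im| ≤ ‖w - (t:ℂ)‖ := by
      calc |w.im| = |(w - (t:ℂ)).im| := by simp
        _ ≤ ‖w - (t:ℂ)‖ := abs_im_le_norm _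
    rw [norm_neg, norm_inv, norm_pow]
    have h3 : |z.im| / 2 ≤ ‖w - (t:ℂ)‖ := le_trans h1 h2
    exact inv_anti₀ (by positivity) (by gcongr)
  · refine Filter.Eventually.of_forall fun t => fun w hw => ?_
    have hw0 : w.im ≠ 0 := by
      have := him w hw
      intro h; rw [h] at this; simp at this; linarith
    have hne : w - (t:ℂ) ≠ 0 := sub_ofReal_ne_zero hw0 t
    have h := ((hasDerivAt_id w).sub_const (t:ℂ)).inv hne
    convert h using 1
    · rfl
    · rfl
    · simp only [id]; ring

lemma isOpen_im_ne : IsOpen {z : ℂ | z.im ≠ 0} :=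
  isOpen_compl_singleton.preimage Complex.continuous_im

lemma cauchyT_analyticAt (μ : Measure ℝ) [IsProbabilityMeasure μ] {z : ℂ} (hz : z.im ≠ 0) :
    AnalyticAt ℂ (cauchyT μ) z := by
  have hdiff : DifferentiableOn ℂ (cauchyT μ) {z : ℂ | z.im ≠ 0} := fun w hw =>
    ((cauchyT_hasDerivAt μ hw).differentiableAt).differentiableWithinAt
  exact (hdiff.analyticOnNhd isOpen_im_ne) z hz

/-- Key non-constancy: `(z - a) * G(z)` cannot be locally the constant `1 - α`. -/
lemma key_nonconst (μ : Measure ℝ) [IsProbabilityMeasure μ]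
    (hcomp : ∃ K : Set ℝ, IsCompact K ∧ μ Kᶜ = 0)
    {α : ℝ} (hα0 : 0 < α) (a z₀ : ℂ) (hz₀ : z₀.im ≠ 0)
    (h : ∀ᶠ z in 𝓝 z₀, (z - a) * cauchyT μ z = ((1 - α : ℝ) : ℂ)) : False := by
  obtain ⟨K, hK, hKc⟩ := hcomp
  obtain ⟨M, hM⟩ := hK.isBounded.subset_closedBall 0
  set M₀ : ℝ := max M 0 with hM₀
  have hM₀0 : (0:ℝ) ≤ M₀ := le_max_right _ _
  have hMae : ∀ᵐ t ∂μ, |t| ≤ M₀ := by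
    have hae : ∀ᵐ t ∂μ, t ∈ K := by
      rw [MeasureTheory.ae_iff]
      exact hKc
    refine hae.mono fun t ht => ?_
    have := hM ht
    simp only [Metric.mem_closedBall, Real.dist_eq, sub_zero] at this
    exact le_trans this (le_max_left _ _)
  -- choose the half-plane containing z₀
  obtain ⟨H, hHo, hHc, hHsub, hz₀H, hbig⟩ :
      ∃ H : Set ℂ, IsOpen H ∧ Convex ℝ H ∧ (∀ z ∈ H, z.im ≠ 0) ∧ z₀ ∈ H ∧
        (∀ y : ℝ, 0 < y → ∃ z ∈ H, |z.im| = y) := by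
    rcases hz₀.lt_or_gt with h1 | h1
    · refine ⟨{z : ℂ | z.im < 0}, ?_, convex_halfSpace_im_lt 0, fun z hz => ne_of_lt hz,
        h1, fun y hy => ⟨⟨0, -y⟩, by simpa using hy, by simp [abs_of_pos hy]⟩⟩
      exact isOpen_lt Complex.continuous_im continuous_const
    · refine ⟨{z : ℂ | 0 < z.im}, ?_, convex_halfSpace_im_gt 0, fun z hz => ne_of_gt hz,
        h1, fun y hy => ⟨⟨0, y⟩, by simpa using hy, by simp [abs_of_pos hy]⟩⟩
      exact isOpen_lt continuous_const Complex.continuous_im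
  set f : ℂ → ℂ := fun z => (z - a) * cauchyT μ z - ((1 - α : ℝ) : ℂ) with hf
  have hfa : AnalyticOnNhd ℂ f H := fun z hz =>
    (((analyticAt_id.sub analyticAt_const).mul (cauchyT_analyticAt μ (hHsub z hz))).sub
      analyticAt_const)
  have hfz₀ : f =ᶠ[𝓝 z₀] 0 := h.mono fun z hz => by simp [hf, hz]
  have hEq : Set.EqOn f 0 H :=
    hfa.eqOn_zero_of_preconnected_of_eventuallyEq_zero hHc.isPreconnected hz₀H hfz₀
  -- pick a point with large imaginary part
  set y : ℝ := (M₀ + ‖a‖) / α + 1 with hy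
  have hy0 : 0 < y := by positivity
  obtain ⟨z, hzH, hzim⟩ := hbig y hy0
  have hzim0 : z.im ≠ 0 := hHsub z hzH
  have hGz : (z - a) * cauchyT μ z = ((1 - α : ℝ) : ℂ) := by
    have := hEq hzH
    simpa [hf, sub_eq_zero] using this
  have hint : Integrable (fun t : ℝ => (z - a) * (z - (t:ℂ))⁻¹) μ :=
    (integrable_inv μ hzim0).const_mul _
  have h1 : ∫ t : ℝ, ((z - a) * (z - (t:ℂ))⁻¹ - 1) ∂μ = ((1 - α : ℝ) : ℂ) - 1 := by
    rw [integral_sub hint (integrable_const 1), integral_const, integral_const_mul]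
    have : (∫ t : ℝ, (z - (t:ℂ))⁻¹ ∂μ) = cauchyT μ z := rfl
    rw [this, hGz]
    simp [measure_univ]
  have h2 : ∫ t : ℝ, ((z - a) * (z - (t:ℂ))⁻¹ - 1) ∂μ
      = ∫ t : ℝ, (((t:ℂ) - a) * (z - (t:ℂ))⁻¹) ∂μ := by
    refine integral_congr_ae (Filter.Eventually.of_forall fun t => ?_)
    have hne : z - (t:ℂ) ≠ 0 := sub_ofReal_ne_zero hzim0 t
    field_simp
    ring
  have hbound : ‖∫ t : ℝ, (((t:ℂ) - a) * (z - (t:ℂ))⁻¹) ∂μ‖ ≤ (M₀ + ‖a‖) / y := by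
    have := norm_integral_le_of_norm_le_const (μ := μ)
      (f := fun t : ℝ => ((t:ℂ) - a) * (z - (t:ℂ))⁻¹) (C := (M₀ + ‖a‖) / y) ?_
    · simpa [measure_univ] using this
    · refine hMae.mono fun t ht => ?_
      rw [norm_mul, norm_inv]
      have hnum : ‖(t:ℂ) - a‖ ≤ M₀ + ‖a‖ := by
        calc ‖(t:ℂ) - a‖ ≤ ‖(t:ℂ)‖ + ‖a‖ := norm_sub_le _ _
          _ ≤ M₀ + ‖a‖ := by
              have habs : ‖(t:ℂ)‖ ≤ M₀ := by
                simpa [Complex.norm_real] using ht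
              linarith
      have hden : y ≤ ‖z - (t:ℂ)‖ := by
        calc y = |z.im| := hzim.symm
          _ = |(z - (t:ℂ)).im| := by simp
          _ ≤ ‖z - (t:ℂ)‖ := abs_im_le_norm _
      calc ‖(t:ℂ) - a‖ * ‖z - (t:ℂ)‖⁻¹ ≤ (M₀ + ‖a‖) * y⁻¹ := by
            gcongr
        _ = (M₀ + ‖a‖) / y := by ring
  have hval : ‖∫ t : ℝ, (((t:ℂ) - a) * (z - (t:ℂ))⁻¹) ∂μ‖ = α := by
    rw [← h2, h1]
    have : ((1 - α : ℝ) : ℂ) - 1 = ((-α : ℝ) : ℂ) := by push_cast; ring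
    rw [this]
    simp [abs_of_pos hα0]
  rw [hval] at hbound
  have hαy : α * y = M₀ + ‖a‖ + α := by
    rw [hy]; field_simp
  rw [le_div_iff₀ hy0] at hbound
  linarith

theorem stmt6 (μ : Measure ℝ) [IsProbabilityMeasure μ]
    (hcomp : ∃ K : Set ℝ, IsCompact K ∧ μ Kᶜ = 0)
    (hnotpoint : ∀ t : ℝ, μ ≠ Measure.dirac t)
    (α : ℝ) (hα : α ∈ Set.Ioo (0 : ℝ) 1) :
    IsOpen {c : ℝ | ∃ w : ℂ, w.im ≠ 0 ∧ w * cauchyT μ (w + c) = ((1 - α : ℝ) : ℂ)} := by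
  obtain ⟨hα0, hα1⟩ := hα
  have hβ : ((1 - α : ℝ) : ℂ) ≠ 0 := by
    simp only [ne_eq, Complex.ofReal_eq_zero]
    intro h; linarith
  set U : Set ℂ := {z : ℂ | z.im ≠ 0 ∧ cauchyT μ z ≠ 0} with hU
  have hUopen : IsOpen U := by
    rw [isOpen_iff_mem_nhds]
    rintro z ⟨hz1, hz2⟩
    have hcont : ContinuousAt (cauchyT μ) z := (cauchyT_hasDerivAt μ hz1).continuousAt
    have h1 : {w : ℂ | w.im ≠ 0} ∈ 𝓝 z := isOpen_im_ne.mem_nhds hz1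
    have h2 : ∀ᶠ w in 𝓝 z, cauchyT μ w ≠ 0 := hcont.eventually_ne hz2
    filter_upwards [h1, h2] with w hw1 hw2
    exact ⟨hw1, hw2⟩
  set Φ : ℂ → ℂ := fun z => z - ((1 - α : ℝ) : ℂ) / cauchyT μ z with hΦ
  have hΦa : ∀ z ∈ U, AnalyticAt ℂ Φ z := fun z hz =>
    analyticAt_id.sub (analyticAt_const.div (cauchyT_analyticAt μ hz.1) hz.2)
  have himage : IsOpen (Φ '' U) := by
    rw [isOpen_iff_mem_nhds]
    rintro c ⟨z₀, hz₀U, rfl⟩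
    rcases (hΦa z₀ hz₀U).eventually_constant_or_nhds_le_map_nhds with hconst | hle
    · exfalso
      apply key_nonconst μ hcomp hα0 (Φ z₀) z₀ hz₀U.1
      have hUnhds : U ∈ 𝓝 z₀ := hUopen.mem_nhds hz₀U
      filter_upwards [hconst, hUnhds] with z h1 h2
      have hzg : cauchyT μ z ≠ 0 := h2.2
      have hdiv : ((1 - α : ℝ) : ℂ) / cauchyT μ z = z - Φ z₀ := by
        rw [← h1]
        simp only [hΦ]
        ring
      rw [div_eq_iff hzg] at hdiv
      rw [hdiv]
    · exact hle (mem_map.2 (Filter.mem_of_superset (hUopen.mem_nhds hz₀U)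
        (Set.subset_preimage_image Φ U)))
  have hset : {c : ℝ | ∃ w : ℂ, w.im ≠ 0 ∧ w * cauchyT μ (w + c) = ((1 - α : ℝ) : ℂ)}
      = (fun c : ℝ => (c : ℂ)) ⁻¹' (Φ '' U) := by
    ext c
    constructor
    · rintro ⟨w, hwim, heq⟩
      have hzim : (w + (c:ℂ)).im ≠ 0 := by simpa using hwim
      have hGz : cauchyT μ (w + c) ≠ 0 := by
        intro h0
        rw [h0, mul_zero] at heq
        exact hβ heq.symm
      refine ⟨w + c, ⟨hzim, hGz⟩, ?_⟩
      have hw : ((1 - α : ℝ) : ℂ) / cauchyT μ (w + c) = w := by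
        rw [div_eq_iff hGz]
        exact heq.symm
      simp only [hΦ, hw]
      ring
    · rintro ⟨z, ⟨hzim, hGz⟩, hΦz⟩
      refine ⟨z - c, by simpa using hzim, ?_⟩
      rw [sub_add_cancel]
      have hzc : z - (c : ℂ) = ((1 - α : ℝ) : ℂ) / cauchyT μ z := by
        have h : z - ((1 - α : ℝ) : ℂ) / cauchyT μ z = (c : ℂ) := hΦz
        linear_combination h
      rw [hzc, div_mul_cancel₀ _ hGz]
  rw [hset]
  exact himage.preimage Complex.continuous_ofReal
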